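/- Sum of k non-null S-paths with disjoint tree connections gives a half-integral k-packing: let (G,Λ) be a Γ-labeled graph, let T₁,…,T_{2k} be pairwise vertex-disjoint trees in G all of whose arcs are labeled 1_Γ, with marked vertices x_i ∈ T_{2i−1}, y_i ∈ T_{2i}, and suppose the trees T_{2i−1} and T_{2i} are joined by an edge labeled 1_Γ for each i. If P₁,…,P_k are vertex-disjoint paths where P_i is a non-null x_i–y_i path, then the k closed walks W_i = P_i + (the x_i–y_i path through T_{2i−1} ∪ T_{2i}) are all non-null, and every vertex of G lies in at most 2 of W₁,…,W_k; hence G has a half-integral k-packing of non-null cycles. -/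

import Mathlib

/-- The label (ordered product of arc labels) of a walk in a `Γ`-labeled graph,
where the labeling is given as a skew-symmetric function `Λ : V → V → Γ`. -/
def walkLabel {V : Type} {Γ : Type} [Group Γ] (G : SimpleGraph V) (Λ : V → V → Γ) :
    {u v : V} → G.Walk u v → Γ
  | _, _, SimpleGraph.Walk.nil => 1
  | _, _, SimpleGraph.Walk.cons (u := a) (v := b) _ p => Λ a b * walkLabel G Λ p

namespace Stmt17Aux

open SimpleGraph Walk

variable {V Γ : Type} [Group Γ] {G : SimpleGraph V} {Λ : V → V → Γ}

@[simp] lemma walkLabel_nil {u : V} :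
    walkLabel G Λ (Walk.nil : G.Walk u u) = 1 := rfl

@[simp] lemma walkLabel_cons {a b c : V} (h : G.Adj a b) (p : G.Walk b c) :
    walkLabel G Λ (Walk.cons h p) = Λ a b * walkLabel G Λ p := rfl

lemma walkLabel_append {u v w : V} (p : G.Walk u v) (q : G.Walk v w) :
    walkLabel G Λ (p.append q) = walkLabel G Λ p * walkLabel G Λ q := by
  induction p with
  | nil => simp
  | cons h p ih => simp [ih, mul_assoc]

lemma walkLabel_eq_one {S : Set V}
    (hid : ∀ u w : V, G.Adj u w → u ∈ S → w ∈ S → Λ u w = 1)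
    {u v : V} (p : G.Walk u v) (hs : ∀ a ∈ p.support, a ∈ S) :
    walkLabel G Λ p = 1 := by
  induction p with
  | nil => rfl
  | cons h p ih =>
    rw [walkLabel_cons,
      hid _ _ h (hs _ (by simp)) (hs _ (by simp [p.start_mem_support])),
      one_mul]
    exact ih fun a ha => hs a (by simp [ha])

lemma eq_nil_of_closed_nodup {u : V} (q : G.Walk u u) (h : q.support.Nodup) :
    q = Walk.nil := by
  cases q with
  | nil => rfl
  | cons ha p =>
    exfalso
    rw [support_cons, List.nodup_cons] at h
    exact h.1 p.end_mem_support

/-- In a walk with no repeated vertices ending at `u`, any edge containing `u`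
must be the last edge. -/
lemma last_edge {u v : V} :
    ∀ {a : V} (p : G.Walk a u), p.support.Nodup → s(u, v) ∈ p.edges →
      ∃ (q : G.Walk a v) (h : G.Adj v u), p = q.append (Walk.cons h Walk.nil) := by
  intro a p
  induction p with
  | nil => simp
  | @cons a c _ h' q ih =>
    intro hnd he
    rw [support_cons, List.nodup_cons] at hnd
    rw [edges_cons, List.mem_cons] at he
    rcases he with he | he
    · rw [Sym2.eq_iff] at he
      rcases he with ⟨hu, hv⟩ | ⟨hu, hv⟩
      · exact absurd (hu ▸ q.end_mem_support) hnd.1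
      · subst hu
        have hqnil : q = Walk.nil := eq_nil_of_closed_nodup q hnd.2
        subst hqnil
        subst hv
        exact ⟨Walk.nil, h', by simp⟩
    · obtain ⟨q0, hadj, rfl⟩ := ih hnd.2 he
      exact ⟨Walk.cons h' q0, hadj, by simp⟩

/-- Extraction of a non-null cycle from a non-null closed walk. -/
lemma extract (hskew : ∀ u v : V, Λ v u = (Λ u v)⁻¹) :
    ∀ (n : ℕ) {u : V} (w : G.Walk u u), w.length ≤ n → walkLabel G Λ w ≠ 1 →
    ∃ (z : V) (c : G.Walk z z), c.IsCycle ∧ walkLabel G Λ c ≠ 1 ∧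
      ∀ v ∈ c.support, v ∈ w.support := by
  classical
  intro n
  induction n with
  | zero =>
    intro u w hlen hL
    cases w with
    | nil => exact absurd rfl hL
    | cons h p => simp at hlen
  | succ n ih =>
    intro u w hlen hL
    cases w with
    | nil => exact absurd rfl hL
    | @cons _ b _ h p =>
      by_cases hnd : p.support.Nodup
      · by_cases he : s(u, b) ∈ p.edges
        · exfalso
          obtain ⟨q, hadj, hq⟩ := last_edge (v := b) p hnd he
          have hqnil : q = Walk.nil := by
            apply eq_nil_of_closed_nodup
            rw [hq, support_append] at hnd
            exact hnd.of_append_left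
          rw [hqnil] at hq
          subst hq
          apply hL
          simp [hskew u b]
        · exact ⟨u, Walk.cons h p,
            (cons_isCycle_iff p h).mpr ⟨IsPath.mk' hnd, he⟩, hL, fun v hv => hv⟩
      · -- there is a repeated vertex z in p.support; split the walk there
        obtain ⟨z, hz2⟩ : ∃ z, 2 ≤ p.support.count z := by
          by_contra hcon
          push_neg at hcon
          exact hnd (List.nodup_iff_count_le_one.mpr fun a =>
            Nat.lt_succ_iff.mp (hcon a))
        have hzmem : z ∈ p.support := by
          rw [← List.count_pos_iff]; omega
        set t := p.takeUntil z hzmem with ht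
        set d := p.dropUntil z hzmem with hd
        have hspec : t.append d = p := p.take_spec hzmem
        have hct : t.support.count z = 1 := p.count_support_takeUntil_eq_one hzmem
        have hzd : z ∈ d.support.tail := by
          rw [← List.count_pos_iff]
          have hsupp : p.support = t.support ++ d.support.tail := by
            rw [← hspec, support_append]
          rw [hsupp, List.count_append, hct] at hz2
          omega
        -- d starts at z and visits z again
        clear_value t d
        cases d with
        | nil => simp at hzd
        | @cons _ a' _ hda d'' =>
          rw [support_cons, List.tail_cons] at hzd
          set tk := d''.takeUntil z hzd with htk
          set rest := d''.dropUntil z hzd with hrest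
          have hspec2 : tk.append rest = d'' := d''.take_spec hzd
          -- length bookkeeping
          have hlp : p.length = t.length + (1 + (tk.length + rest.length)) := by
            conv_lhs => rw [← hspec]
            rw [length_append]
            congr 1
            rw [length_cons]
            conv_lhs => rw [← hspec2]
            rw [length_append]
            omega
          have hlw : (Walk.cons h p).length = p.length + 1 := length_cons _ _
          -- label bookkeeping
          have hLp : walkLabel G Λ p =
              walkLabel G Λ t * (Λ z a' * (walkLabel G Λ tk * walkLabel G Λ rest)) := by
            conv_lhs => rw [← hspec]
            rw [walkLabel_append]
            congr 1
            rw [walkLabel_cons]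
            congr 1
            conv_lhs => rw [← hspec2]
            rw [walkLabel_append]
          -- support inclusions
          have hsubd : ∀ v ∈ d''.support, v ∈ (Walk.cons h p).support := by
            intro v hv
            have : v ∈ (Walk.cons hda d'').support := by
              rw [support_cons]; exact List.mem_cons_of_mem _ hv
            have : v ∈ p.support := support_dropUntil_subset p hzmem (hd ▸ this)
            rw [support_cons]; exact List.mem_cons_of_mem _ this
          set loop : G.Walk z z := Walk.cons hda tk with hloop
          have hsubloop : ∀ v ∈ loop.support, v ∈ (Walk.cons h p).support := by
            intro v hv
            rw [hloop, support_cons, List.mem_cons] at hv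
            rcases hv with rfl | hv
            · rw [support_cons]; exact List.mem_cons_of_mem _ hzmem
            · exact hsubd v (support_takeUntil_subset d'' hzd hv)
          by_cases hl1 : walkLabel G Λ loop = 1
          · -- recurse on the shortcut walk
            have hl1' : Λ z a' * walkLabel G Λ tk = 1 := by
              rw [hloop, walkLabel_cons] at hl1; exact hl1
            set w2 : G.Walk u u := Walk.cons h (t.append rest) with hw2
            have hLw2 : walkLabel G Λ w2 = walkLabel G Λ (Walk.cons h p) := by
              rw [hw2, walkLabel_cons, walkLabel_cons, hLp, walkLabel_append]
              congr 1
              congr 1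
              rw [← mul_assoc, hl1', one_mul]
            have hlen2 : w2.length ≤ n := by
              rw [hw2, length_cons, length_append]
              rw [hlw, hlp] at hlen
              omega
            obtain ⟨z', c, hc1, hc2, hc3⟩ := ih w2 hlen2 (hLw2 ▸ hL)
            refine ⟨z', c, hc1, hc2, fun v hv => ?_⟩
            have hv2 := hc3 v hv
            rw [hw2, support_cons, List.mem_cons] at hv2
            rcases hv2 with rfl | hv2
            · exact start_mem_support _
            · rw [mem_support_append_iff] at hv2
              rcases hv2 with hv2 | hv2
              · rw [ht] at hv2
                have : v ∈ p.support := support_takeUntil_subset p hzmem hv2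
                rw [support_cons]; exact List.mem_cons_of_mem _ this
              · exact hsubd v (support_dropUntil_subset d'' hzd hv2)
          · -- recurse on the loop
            have hlenloop : loop.length ≤ n := by
              rw [hloop, length_cons]
              rw [hlw, hlp] at hlen
              omega
            obtain ⟨z', c, hc1, hc2, hc3⟩ := ih loop hlenloop hl1
            exact ⟨z', c, hc1, hc2, fun v hv => hsubloop v (hc3 v hv)⟩

end Stmt17Aux

open SimpleGraph Walk Stmt17Aux in
/-- Closing k vertex-disjoint non-null paths through pairwise disjoint
identity-labeled trees (joined pairwise by identity edges) gives k non-null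
closed walks with every vertex in at most 2 of them; hence a half-integral
k-packing of non-null cycles. -/
theorem stmt17 {V Γ : Type} [Group Γ] (G : SimpleGraph V) (Λ : V → V → Γ)
    (hskew : ∀ u v : V, Λ v u = (Λ u v)⁻¹)
    (k : ℕ) (A B : Fin k → Set V)
    (hAB : ∀ i j : Fin k, Disjoint (A i) (B j))
    (hAA : ∀ i j : Fin k, i ≠ j → Disjoint (A i) (A j))
    (hBB : ∀ i j : Fin k, i ≠ j → Disjoint (B i) (B j))
    (hAtree : ∀ i, (G.induce (A i)).Connected ∧ (G.induce (A i)).IsAcyclic)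
    (hBtree : ∀ i, (G.induce (B i)).Connected ∧ (G.induce (B i)).IsAcyclic)
    (hAid : ∀ i, ∀ u w : V, G.Adj u w → u ∈ A i → w ∈ A i → Λ u w = 1)
    (hBid : ∀ i, ∀ u w : V, G.Adj u w → u ∈ B i → w ∈ B i → Λ u w = 1)
    (hjoin : ∀ i, ∃ a ∈ A i, ∃ b ∈ B i, G.Adj a b ∧ Λ a b = 1)
    (x y : Fin k → V) (hx : ∀ i, x i ∈ A i) (hy : ∀ i, y i ∈ B i)
    (P : ∀ i : Fin k, G.Walk (x i) (y i))
    (hPpath : ∀ i, (P i).IsPath)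
    (hPnn : ∀ i, walkLabel G Λ (P i) ≠ 1)
    (hPdisj : ∀ i j : Fin k, i ≠ j → ∀ v ∈ (P i).support, v ∉ (P j).support) :
    (∃ W : ∀ i : Fin k, G.Walk (x i) (x i),
      (∀ i, walkLabel G Λ (W i) ≠ 1 ∧
        ∀ v ∈ (W i).support, v ∈ (P i).support ∨ v ∈ A i ∨ v ∈ B i) ∧
      (∀ v : V, {i : Fin k | v ∈ (W i).support}.ncard ≤ 2)) ∧
    (∃ (z : Fin k → V) (c : ∀ i : Fin k, G.Walk (z i) (z i)),
      (∀ i, (c i).IsCycle ∧ walkLabel G Λ (c i) ≠ 1) ∧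
      (∀ v : V, {i : Fin k | v ∈ (c i).support}.ncard ≤ 2)) := by
  classical
  -- build the return walks through the trees
  have key : ∀ i, ∃ Q : G.Walk (y i) (x i), walkLabel G Λ Q = 1 ∧
      ∀ v ∈ Q.support, v ∈ A i ∨ v ∈ B i := by
    intro i
    obtain ⟨a, ha, b, hb, hab, hlab⟩ := hjoin i
    obtain ⟨qB⟩ := ((hBtree i).1.preconnected ⟨y i, hy i⟩ ⟨b, hb⟩)
    obtain ⟨qA⟩ := ((hAtree i).1.preconnected ⟨a, ha⟩ ⟨x i, hx i⟩)
    let wB : G.Walk (y i) b := qB.map (SimpleGraph.Embedding.induce (B i)).toHom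
    let wA : G.Walk a (x i) := qA.map (SimpleGraph.Embedding.induce (A i)).toHom
    have hwB : ∀ v ∈ wB.support, v ∈ B i := by
      intro v hv
      simp only [wB] at hv
      erw [Walk.support_map, List.mem_map] at hv
      obtain ⟨s, _, rfl⟩ := hv
      exact s.2
    have hwA : ∀ v ∈ wA.support, v ∈ A i := by
      intro v hv
      simp only [wA] at hv
      erw [Walk.support_map, List.mem_map] at hv
      obtain ⟨s, _, rfl⟩ := hv
      exact s.2
    refine ⟨wB.append (Walk.cons hab.symm wA), ?_, ?_⟩
    · rw [walkLabel_append, walkLabel_cons,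
        walkLabel_eq_one (hBid i) wB hwB,
        walkLabel_eq_one (hAid i) wA hwA,
        hskew a b, hlab]
      simp
    · intro v hv
      rw [mem_support_append_iff] at hv
      rcases hv with hv | hv
      · exact Or.inr (hwB v hv)
      · rw [support_cons, List.mem_cons] at hv
        rcases hv with rfl | hv
        · exact Or.inr hb
        · exact Or.inl (hwA v hv)
  choose Q hQ1 hQ2 using key
  set W : ∀ i : Fin k, G.Walk (x i) (x i) := fun i => (P i).append (Q i) with hW
  have hWlab : ∀ i, walkLabel G Λ (W i) ≠ 1 := by
    intro i
    rw [hW]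
    simpa [walkLabel_append, hQ1 i] using hPnn i
  have hWsup : ∀ i, ∀ v ∈ (W i).support,
      v ∈ (P i).support ∨ v ∈ A i ∨ v ∈ B i := by
    intro i v hv
    rw [hW] at hv
    rw [mem_support_append_iff] at hv
    rcases hv with hv | hv
    · exact Or.inl hv
    · exact Or.inr (hQ2 i v hv)
  have hPsing : ∀ v : V, {i : Fin k | v ∈ (P i).support}.Subsingleton := by
    intro v i hi j hj
    by_contra hne
    exact hPdisj i j hne v hi hj
  have hABsing : ∀ v : V, {i : Fin k | v ∈ A i ∨ v ∈ B i}.Subsingleton := by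
    intro v i hi j hj
    by_contra hne
    rcases hi with hi | hi <;> rcases hj with hj | hj
    · exact (hAA i j hne).ne_of_mem hi hj rfl
    · exact (hAB i j).ne_of_mem hi hj rfl
    · exact (hAB j i).ne_of_mem hj hi rfl
    · exact (hBB i j hne).ne_of_mem hi hj rfl
  have hWcard : ∀ v : V, {i : Fin k | v ∈ (W i).support}.ncard ≤ 2 := by
    intro v
    have hsub : {i : Fin k | v ∈ (W i).support} ⊆
        {i : Fin k | v ∈ (P i).support} ∪ {i : Fin k | v ∈ A i ∨ v ∈ B i} := by
      intro i hi
      rcases hWsup i v hi with h | h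
      · exact Or.inl h
      · exact Or.inr h
    calc {i : Fin k | v ∈ (W i).support}.ncard
        ≤ ({i : Fin k | v ∈ (P i).support} ∪ {i : Fin k | v ∈ A i ∨ v ∈ B i}).ncard :=
          Set.ncard_le_ncard hsub (Set.toFinite _)
      _ ≤ {i : Fin k | v ∈ (P i).support}.ncard +
            {i : Fin k | v ∈ A i ∨ v ∈ B i}.ncard := Set.ncard_union_le _ _
      _ ≤ 1 + 1 := by
          gcongr
          · exact (Set.ncard_le_one (Set.toFinite _)).mpr
              (fun a ha b hb => hPsing v ha hb)
          · exact (Set.ncard_le_one (Set.toFinite _)).mpr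
              (fun a ha b hb => hABsing v ha hb)
      _ = 2 := rfl
  refine ⟨⟨W, fun i => ⟨hWlab i, hWsup i⟩, hWcard⟩, ?_⟩
  -- extract non-null cycles from the closed walks
  have hext : ∀ i, ∃ (z : V) (c : G.Walk z z), c.IsCycle ∧ walkLabel G Λ c ≠ 1 ∧
      ∀ v ∈ c.support, v ∈ (W i).support := by
    intro i
    exact extract hskew (W i).length (W i) le_rfl (hWlab i)
  choose z c hc1 hc2 hc3 using hext
  refine ⟨z, c, fun i => ⟨hc1 i, hc2 i⟩, fun v => ?_⟩
  have hsub : {i : Fin k | v ∈ (c i).support} ⊆ {i : Fin k | v ∈ (W i).support} :=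
    fun i hi => hc3 i v hi
  exact le_trans (Set.ncard_le_ncard hsub (Set.toFinite _)) (hWcard v)
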